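/- Let G be a bounded Vilenkin group, 0 < p ≤ 1, a a p-atom supported on I_N, and α > M_N. If x ∈ I_s \ I_{s+1} with ⟨α⟩ ≤ s ≤ N − 1, then |S_α a(x)| ≤ c_p M_N^{1/p − 1} M_s, with c_p depending only on p and sup_k m_k. -/

import Mathlib

open MeasureTheory Complex Real

def Mseq (m : ℕ → ℕ) : ℕ → ℕ
  | 0 => 1
  | k + 1 => m k * Mseq m k

def digit (m : ℕ → ℕ) (n j : ℕ) : ℕ := n / Mseq m j % m j

noncomputable def hi (m : ℕ → ℕ) (n : ℕ) : ℕ := sSup {j | digit m n j ≠ 0}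

noncomputable def lo (m : ℕ → ℕ) (n : ℕ) : ℕ := sInf {j | digit m n j ≠ 0}

noncomputable def rho (m : ℕ → ℕ) (n : ℕ) : ℕ := hi m n - lo m n

abbrev Gm (m : ℕ → ℕ) := ∀ k, ZMod (m k)

instance (n : ℕ) : MeasurableSpace (ZMod n) := ⊤

noncomputable def rad (m : ℕ → ℕ) (j : ℕ) (x : Gm m) : ℂ :=
  Complex.exp (2 * Real.pi * Complex.I * ((x j).val : ℂ) / (m j : ℂ))

noncomputable def vil (m : ℕ → ℕ) (n : ℕ) (x : Gm m) : ℂ :=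
  ∏ᶠ j, rad m j x ^ digit m n j

noncomputable def Dker (m : ℕ → ℕ) (n : ℕ) (x : Gm m) : ℂ :=
  ∑ k ∈ Finset.range n, vil m k x

/-- The defining property of the normalized Haar measure on the Vilenkin group:
every cylinder set `I_n(x)` has measure `1 / M_n`. -/
def IsVilenkinHaar (m : ℕ → ℕ) (μ : Measure (Gm m)) : Prop :=
  ∀ (n : ℕ) (x : Gm m), μ {y : Gm m | ∀ j < n, y j = x j} = (Mseq m n : ENNReal)⁻¹

noncomputable def vilCoeff (m : ℕ → ℕ) (μ : Measure (Gm m)) (f : Gm m → ℂ) (j : ℕ) : ℂ :=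
  ∫ t, f t * (starRingEnd ℂ) (vil m j t) ∂μ

noncomputable def Svil (m : ℕ → ℕ) (μ : Measure (Gm m)) (f : Gm m → ℂ) (n : ℕ) (x : Gm m) : ℂ :=
  ∑ j ∈ Finset.range n, vilCoeff m μ f j * vil m j x

/-- `a : G_m → ℂ` is a `p`-atom supported on the cylinder `I_N`: it is measurable,
vanishes off `I_N`, satisfies `‖a‖_∞ ≤ μ(I_N)^{-1/p} = M_N^{1/p}` and has mean zero. -/
def IsPAtom (m : ℕ → ℕ) (μ : Measure (Gm m)) (p : ℝ) (N : ℕ) (a : Gm m → ℂ) : Prop :=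
  Measurable a ∧
    (∀ x : Gm m, (¬ ∀ j < N, x j = 0) → a x = 0) ∧
    (∀ x : Gm m, ‖a x‖ ≤ (Mseq m N : ℝ) ^ (1 / p)) ∧
    ∫ x, a x ∂μ = 0

section aux
variable {m : ℕ → ℕ} (hm : ∀ k, 2 ≤ m k)
include hm

lemma Mseq_pos (L : ℕ) : 0 < Mseq m L := by
  induction L with
  | zero => exact Nat.one_pos
  | succ L ih => exact Nat.mul_pos (by have := hm L; omega) ih

lemma Mseq_dvd {L J : ℕ} (h : L ≤ J) : Mseq m L ∣ Mseq m J := by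
  induction J with
  | zero => simpa [Nat.le_zero.mp h]
  | succ J ih =>
    rcases Nat.lt_or_ge L (J+1) with h' | h'
    · exact (ih (by omega)).trans ⟨m J, by simp [Mseq, Nat.mul_comm]⟩
    · have : L = J + 1 := by omega
      simp [this]

lemma Mseq_mono {L J : ℕ} (h : L ≤ J) : Mseq m L ≤ Mseq m J :=
  Nat.le_of_dvd (Mseq_pos hm J) (Mseq_dvd hm h)

lemma digit_lt (n j : ℕ) : digit m n j < m j := Nat.mod_lt _ (by have := hm j; omega)

lemma digit_eq_zero_of_lt {n L j : ℕ} (hn : n < Mseq m L) (hj : L ≤ j) :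
    digit m n j = 0 := by
  have : n < Mseq m j := lt_of_lt_of_le hn (Mseq_mono hm hj)
  simp [digit, Nat.div_eq_of_lt this]

lemma self_lt_Mseq_succ (n : ℕ) : n < Mseq m (n+1) := by
  induction n with
  | zero => simpa [Mseq] using by have := hm 0; omega
  | succ n ih =>
    have h2 : 2 ≤ m (n+1) := hm (n+1)
    have : 2 * Mseq m (n+1) ≤ m (n+1) * Mseq m (n+1) :=
      Nat.mul_le_mul_right _ h2
    have h1 : 1 ≤ Mseq m (n+1) := Mseq_pos hm (n+1)
    calc n + 1 < Mseq m (n+1) + 1 := by omega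
    _ ≤ Mseq m (n+1) + Mseq m (n+1) := by omega
    _ = 2 * Mseq m (n+1) := by ring
    _ ≤ Mseq m (n+2) := by simpa [Mseq] using this

lemma mulSupport_subset {n L : ℕ} (hn : n < Mseq m L) (x : Gm m) :
    Function.mulSupport (fun j => rad m j x ^ digit m n j) ⊆ ↑(Finset.range L) := by
  intro j hj
  simp only [Function.mem_mulSupport] at hj
  simp only [Finset.coe_range, Set.mem_Iio]
  by_contra h
  rw [digit_eq_zero_of_lt hm hn (by omega), pow_zero] at hj
  exact hj rfl

lemma vil_eq_prod {n L : ℕ} (hn : n < Mseq m L) (x : Gm m) :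
    vil m n x = ∏ j ∈ Finset.range L, rad m j x ^ digit m n j :=
  finprod_eq_prod_of_mulSupport_subset _ (mulSupport_subset hm hn x)

lemma abs_rad (j : ℕ) (x : Gm m) : ‖rad m j x‖ = 1 := by
  rw [rad, Complex.norm_exp]
  have : (2 * Real.pi * Complex.I * ((x j).val : ℂ) / (m j : ℂ)).re = 0 := by
    simp [div_eq_mul_inv]
  rw [this, Real.exp_zero]

lemma abs_vil (n : ℕ) (x : Gm m) : ‖vil m n x‖ = 1 := by
  rw [vil_eq_prod hm (self_lt_Mseq_succ hm n) x, norm_prod]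
  simp [abs_rad hm]

lemma vil_zero (x : Gm m) : vil m 0 x = 1 := by
  rw [vil_eq_prod hm (Mseq_pos hm 1) x]
  simp [digit]

end aux

section aux2
variable {m : ℕ → ℕ} (hm : ∀ k, 2 ≤ m k)
include hm

lemma digit_mul_Mseq_lo {q L j : ℕ} (hj : j < L) : digit m (q * Mseq m L) j = 0 := by
  obtain ⟨u, hu⟩ : m j * Mseq m j ∣ Mseq m L := by
    have : Mseq m (j+1) ∣ Mseq m L := Mseq_dvd hm (by omega)
    simpa [Mseq, mul_comm] using this
  have hMj : 0 < Mseq m j := Mseq_pos hm j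
  have h1 : q * Mseq m L = (m j * (q * u)) * Mseq m j := by rw [hu]; ring
  rw [digit, h1, Nat.mul_div_cancel _ hMj, Nat.mul_mod_right]

lemma digit_add_mul {q r L : ℕ} (hr : r < Mseq m L) (j : ℕ) :
    digit m (q * Mseq m L + r) j = digit m (q * Mseq m L) j + digit m r j := by
  rcases Nat.lt_or_ge j L with hj | hj
  · rw [digit_mul_Mseq_lo hm hj, Nat.zero_add]
    obtain ⟨u, hu⟩ : m j * Mseq m j ∣ Mseq m L := by
      have : Mseq m (j+1) ∣ Mseq m L := Mseq_dvd hm (by omega)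
      simpa [Mseq, mul_comm] using this
    have hMj : 0 < Mseq m j := Mseq_pos hm j
    have h1 : q * Mseq m L + r = r + (m j * (q * u)) * Mseq m j := by rw [hu]; ring
    rw [digit, h1, Nat.add_mul_div_right _ _ hMj, Nat.add_mul_mod_self_left]
    rfl
  · have hr0 : digit m r j = 0 :=
      digit_eq_zero_of_lt hm (lt_of_lt_of_le hr (Mseq_mono hm hj)) (le_refl j)
    rw [hr0, Nat.add_zero]
    obtain ⟨e, he⟩ : Mseq m L ∣ Mseq m j := Mseq_dvd hm hj
    have hML : 0 < Mseq m L := Mseq_pos hm L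
    rw [digit, digit, he, ← Nat.div_div_eq_div_mul, ← Nat.div_div_eq_div_mul]
    have h2 : (q * Mseq m L + r) / Mseq m L = q := by
      rw [add_comm, Nat.add_mul_div_right _ _ hML, Nat.div_eq_of_lt hr, Nat.zero_add]
    have h3 : q * Mseq m L / Mseq m L = q := Nat.mul_div_cancel _ hML
    rw [h2, h3]

lemma vil_add_mul {q r L : ℕ} (hr : r < Mseq m L) (x : Gm m) :
    vil m (q * Mseq m L + r) x = vil m (q * Mseq m L) x * vil m r x := by
  set n := q * Mseq m L + r with hn
  set T := max L (n + 1) with hT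
  have h1 : n < Mseq m T :=
    lt_of_lt_of_le (self_lt_Mseq_succ hm n) (Mseq_mono hm (le_max_right _ _))
  have h2 : q * Mseq m L < Mseq m T := lt_of_le_of_lt (by omega) h1
  have h3 : r < Mseq m T := lt_of_lt_of_le hr (Mseq_mono hm (le_max_left _ _))
  rw [vil_eq_prod hm h1, vil_eq_prod hm h2, vil_eq_prod hm h3, ← Finset.prod_mul_distrib]
  apply Finset.prod_congr rfl
  intro j _
  rw [digit_add_mul hm hr j, pow_add]

lemma vil_mul_Mseq {d L : ℕ} (hd : d < m L) (x : Gm m) :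
    vil m (d * Mseq m L) x = rad m L x ^ d := by
  have hdig : digit m (d * Mseq m L) L = d := by
    rw [digit, Nat.mul_div_cancel _ (Mseq_pos hm L), Nat.mod_eq_of_lt hd]
  rw [vil, finprod_eq_single _ L]
  · rw [hdig]
  · intro j hj
    rcases Nat.lt_or_ge j L with h | h
    · rw [digit_mul_Mseq_lo hm h, pow_zero]
    · have hjL : L < j := by omega
      have : d * Mseq m L < Mseq m (L+1) := by
        have : d * Mseq m L < m L * Mseq m L :=
          Nat.mul_lt_mul_of_lt_of_le hd (le_refl _) (Mseq_pos hm L)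
        simpa [Mseq] using this
      rw [digit_eq_zero_of_lt hm this (by omega), pow_zero]

lemma geom_rad_zero {L : ℕ} {x : Gm m} (hx : x L ≠ 0) :
    ∑ u ∈ Finset.range (m L), rad m L x ^ u = 0 := by
  haveI : NeZero (m L) := ⟨by have := hm L; omega⟩
  set v : ℕ := (x L).val with hv
  have hv0 : v ≠ 0 := fun h => hx ((ZMod.val_eq_zero _).mp h)
  have hvm : v < m L := ZMod.val_lt _
  have hm0 : (m L : ℂ) ≠ 0 := Nat.cast_ne_zero.mpr (by have := hm L; omega)
  have h2 : (2 * (Real.pi : ℂ) * Complex.I) ≠ 0 := by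
    simp [Real.pi_ne_zero, Complex.I_ne_zero]
  set z : ℂ := rad m L x with hz
  have hzm : z ^ m L = 1 := by
    rw [hz, rad, ← Complex.exp_nat_mul]
    have he : (m L : ℂ) * (2 * (Real.pi : ℂ) * Complex.I * (v : ℂ) / (m L : ℂ))
        = (v : ℤ) * (2 * (Real.pi : ℂ) * Complex.I) := by
      push_cast
      field_simp
    rw [he]
    exact Complex.exp_int_mul_two_pi_mul_I (v : ℤ)
  have hz1 : z ≠ 1 := by
    intro h
    rw [hz, rad, Complex.exp_eq_one_iff] at h
    obtain ⟨k, hk⟩ := h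
    rw [div_eq_iff hm0] at hk
    have hkv : (v : ℂ) = (k : ℂ) * (m L : ℂ) := by
      apply mul_left_cancel₀ h2
      linear_combination hk
    have hvz : (v : ℤ) = k * (m L : ℤ) := by exact_mod_cast hkv
    rcases le_or_gt k 0 with hk0 | hk0
    · have hle : k * (m L : ℤ) ≤ 0 :=
        mul_nonpos_of_nonpos_of_nonneg hk0 (by positivity)
      rw [← hvz] at hle
      omega
    · have hk1 : (1 : ℤ) ≤ k := hk0
      have hge : (m L : ℤ) ≤ k * (m L : ℤ) :=
        le_mul_of_one_le_left (by positivity) hk1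
      rw [← hvz] at hge
      omega
  rw [geom_sum_eq hz1, hzm, sub_self, zero_div]

end aux2

lemma sum_range_mul' {β : Type*} [AddCommMonoid β] (f : ℕ → β) (Q B : ℕ) :
    ∑ k ∈ Finset.range (Q * B), f k
      = ∑ q ∈ Finset.range Q, ∑ r ∈ Finset.range B, f (q * B + r) := by
  induction Q with
  | zero => simp
  | succ Q ih => rw [Nat.succ_mul, Finset.sum_range_add, ih, Finset.sum_range_succ]

section aux3
variable {m : ℕ → ℕ} (hm : ∀ k, 2 ≤ m k)
include hm

lemma Dker_rec {n L : ℕ} (hn : n ≤ Mseq m (L+1)) (x : Gm m) :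
    Dker m n x = (∑ u ∈ Finset.range (n / Mseq m L), rad m L x ^ u) * Dker m (Mseq m L) x
      + vil m ((n / Mseq m L) * Mseq m L) x * Dker m (n % Mseq m L) x := by
  set B := Mseq m L with hB
  set d := n / B with hd
  set r := n % B with hr
  have hBpos : 0 < B := Mseq_pos hm L
  have hdm : d ≤ m L := by
    have h1 : n / B ≤ (m L * B) / B := Nat.div_le_div_right (by simpa [Mseq] using hn)
    rwa [Nat.mul_div_cancel _ hBpos] at h1
  have hrB : r < B := Nat.mod_lt _ hBpos
  have hn' : n = d * B + r := by
    rw [hd, hr, hB, mul_comm]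
    exact (Nat.div_add_mod n (Mseq m L)).symm
  have step1 : Dker m n x = ∑ k ∈ Finset.range (d * B + r), vil m k x := by
    rw [Dker, ← hn']
  rw [step1, Finset.sum_range_add, sum_range_mul']
  congr 1
  · rw [Finset.sum_mul]
    apply Finset.sum_congr rfl
    intro q hq
    have hq' : q < m L := lt_of_lt_of_le (Finset.mem_range.mp hq) hdm
    rw [Dker, Finset.mul_sum]
    apply Finset.sum_congr rfl
    intro i hi
    rw [vil_add_mul hm (Finset.mem_range.mp hi) x, vil_mul_Mseq hm hq' x]
  · rw [Dker, Finset.mul_sum]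
    apply Finset.sum_congr rfl
    intro i hi
    rw [vil_add_mul hm (lt_trans (Finset.mem_range.mp hi) hrB) x]

lemma Dker_Mseq_succ (L : ℕ) (x : Gm m) :
    Dker m (Mseq m (L+1)) x
      = (∑ u ∈ Finset.range (m L), rad m L x ^ u) * Dker m (Mseq m L) x := by
  have h := Dker_rec hm (le_refl (Mseq m (L+1))) x
  have h1 : Mseq m (L+1) / Mseq m L = m L := by
    rw [Mseq, Nat.mul_div_cancel _ (Mseq_pos hm L)]
  have h2 : Mseq m (L+1) % Mseq m L = 0 := by
    rw [Mseq, Nat.mul_mod_left]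
  rw [h1, h2] at h
  simpa [Dker] using h

lemma Dker_Mseq_eq_zero {t L : ℕ} {x : Gm m} (ht : t < L) (hx : x t ≠ 0) :
    Dker m (Mseq m L) x = 0 := by
  induction L with
  | zero => omega
  | succ L ih =>
    rw [Dker_Mseq_succ hm L x]
    by_cases htL : t = L
    · subst htL
      rw [geom_rad_zero hm hx, zero_mul]
    · rw [ih (by omega), mul_zero]

lemma abs_Dker_le_card (n : ℕ) (x : Gm m) : ‖Dker m n x‖ ≤ (n : ℝ) := by
  calc ‖Dker m n x‖ ≤ ∑ k ∈ Finset.range n, ‖vil m k x‖ := by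
        exact norm_sum_le _ _
  _ = n := by simp [abs_vil hm]

end aux3

section aux4
variable {m : ℕ → ℕ} (hm : ∀ k, 2 ≤ m k)
include hm

lemma sum_Mseq_le (L : ℕ) : ∑ j ∈ Finset.range L, Mseq m j ≤ Mseq m L := by
  induction L with
  | zero => simp [Mseq]
  | succ L ih =>
    rw [Finset.sum_range_succ]
    have h2 : 2 * Mseq m L ≤ m L * Mseq m L := Nat.mul_le_mul_right _ (hm L)
    calc ∑ j ∈ Finset.range L, Mseq m j + Mseq m L ≤ Mseq m L + Mseq m L := by omega
    _ = 2 * Mseq m L := by ring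
    _ ≤ Mseq m (L+1) := by simpa [Mseq] using h2

lemma abs_Dker_bound {mstar : ℕ} (hms : ∀ k, m k ≤ mstar) {s : ℕ} {x : Gm m}
    (hx : x s ≠ 0) :
    ∀ L, ∀ n < Mseq m L, ‖Dker m n x‖
      ≤ (mstar : ℝ) * ∑ j ∈ Finset.range (min L (s+1)), (Mseq m j : ℝ) := by
  intro L
  induction L with
  | zero =>
    intro n hn
    have : n = 0 := by simpa [Mseq] using hn
    subst this
    simp [Dker]
  | succ L ih =>
    intro n hn
    have hBpos : 0 < Mseq m L := Mseq_pos hm L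
    have hd : n / Mseq m L < m L := by
      rw [Nat.div_lt_iff_lt_mul hBpos]
      simpa [Mseq, mul_comm] using hn
    have hr : n % Mseq m L < Mseq m L := Nat.mod_lt _ hBpos
    rw [Dker_rec hm (le_of_lt (by simpa [Mseq] using hn)) x]
    have htri := norm_add_le
      ((∑ u ∈ Finset.range (n / Mseq m L), rad m L x ^ u) * Dker m (Mseq m L) x)
      (vil m ((n / Mseq m L) * Mseq m L) x * Dker m (n % Mseq m L) x)
    refine le_trans htri ?_
    rw [norm_mul, norm_mul, abs_vil hm, one_mul]
    have hsecond := ih _ hr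
    by_cases hLs : L ≤ s
    · have hmin1 : min (L+1) (s+1) = L + 1 := by omega
      have hmin2 : min L (s+1) = L := by omega
      rw [hmin1, Finset.sum_range_succ]
      rw [hmin2] at hsecond
      have hgeom : ‖∑ u ∈ Finset.range (n / Mseq m L), rad m L x ^ u‖
          ≤ (mstar : ℝ) := by
        calc ‖∑ u ∈ Finset.range (n / Mseq m L), rad m L x ^ u‖
            ≤ ∑ u ∈ Finset.range (n / Mseq m L), ‖rad m L x ^ u‖ :=
              norm_sum_le _ _
        _ = ((n / Mseq m L : ℕ) : ℝ) := by simp [norm_pow, abs_rad hm]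
        _ ≤ (mstar : ℝ) := by
              have : n / Mseq m L ≤ mstar := le_trans (le_of_lt hd) (hms L)
              exact_mod_cast this
      have hDL : ‖Dker m (Mseq m L) x‖ ≤ (Mseq m L : ℝ) :=
        abs_Dker_le_card hm _ x
      have h1 : ‖∑ u ∈ Finset.range (n / Mseq m L), rad m L x ^ u‖
          * ‖Dker m (Mseq m L) x‖ ≤ (mstar : ℝ) * (Mseq m L : ℝ) :=
        mul_le_mul hgeom hDL (norm_nonneg _) (by positivity)
      calc _ ≤ (mstar : ℝ) * (Mseq m L : ℝ)
            + (mstar : ℝ) * ∑ j ∈ Finset.range L, (Mseq m j : ℝ) := by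
              exact add_le_add h1 hsecond
      _ = (mstar : ℝ) * (∑ j ∈ Finset.range L, (Mseq m j : ℝ) + (Mseq m L : ℝ)) := by ring
    · have hsL : s < L := by omega
      rw [Dker_Mseq_eq_zero hm hsL hx]
      have hmin : min (L+1) (s+1) = min L (s+1) := by omega
      rw [hmin]
      simpa using hsecond

lemma abs_Dker_final {mstar : ℕ} (hms : ∀ k, m k ≤ mstar) {s N n : ℕ} {x : Gm m}
    (hx : x s ≠ 0) (hn : n < Mseq m N) :
    ‖Dker m n x‖ ≤ (mstar : ℝ) * (mstar : ℝ) * (Mseq m s : ℝ) := by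
  have h1 := abs_Dker_bound hm hms hx N n hn
  have h2 : ∑ j ∈ Finset.range (min N (s+1)), (Mseq m j : ℝ)
      ≤ ∑ j ∈ Finset.range (s+1), (Mseq m j : ℝ) := by
    apply Finset.sum_le_sum_of_subset_of_nonneg
    · exact Finset.range_subset_range.mpr (by omega)
    · intro i _ _; positivity
  have h3 : ∑ j ∈ Finset.range (s+1), (Mseq m j : ℝ) ≤ (Mseq m (s+1) : ℝ) := by
    have := sum_Mseq_le hm (s+1)
    push_cast
    exact_mod_cast this
  have h4 : (Mseq m (s+1) : ℝ) ≤ (mstar : ℝ) * (Mseq m s : ℝ) := by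
    have : Mseq m (s+1) ≤ mstar * Mseq m s := by
      simpa [Mseq] using Nat.mul_le_mul_right (Mseq m s) (hms s)
    exact_mod_cast this
  have hm0 : (0:ℝ) ≤ (mstar : ℝ) := by positivity
  calc ‖Dker m n x‖
      ≤ (mstar : ℝ) * ∑ j ∈ Finset.range (min N (s+1)), (Mseq m j : ℝ) := h1
  _ ≤ (mstar : ℝ) * ((mstar : ℝ) * (Mseq m s : ℝ)) := by
      apply mul_le_mul_of_nonneg_left _ hm0
      exact le_trans h2 (le_trans h3 h4)
  _ = (mstar : ℝ) * (mstar : ℝ) * (Mseq m s : ℝ) := by ring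

end aux4

section aux5
open MeasureTheory
variable {m : ℕ → ℕ} (hm : ∀ k, 2 ≤ m k)
include hm

lemma vil_eq_one {r N : ℕ} (hr : r < Mseq m N) {t : Gm m} (ht : ∀ j < N, t j = 0) :
    vil m r t = 1 := by
  rw [vil_eq_prod hm hr]
  apply Finset.prod_eq_one
  intro j hj
  haveI : NeZero (m j) := ⟨by have := hm j; omega⟩
  rw [rad, ht j (Finset.mem_range.mp hj)]
  simp

lemma vilCoeff_block {N q r : ℕ} (hr : r < Mseq m N) (μ : Measure (Gm m))
    {a : Gm m → ℂ} (ha : ∀ t : Gm m, (¬ ∀ j < N, t j = 0) → a t = 0) :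
    vilCoeff m μ a (q * Mseq m N + r) = vilCoeff m μ a (q * Mseq m N) := by
  have hfun : (fun t => a t * (starRingEnd ℂ) (vil m (q * Mseq m N + r) t))
      = fun t => a t * (starRingEnd ℂ) (vil m (q * Mseq m N) t) := by
    funext t
    by_cases h : ∀ j < N, t j = 0
    · rw [vil_add_mul hm hr t, vil_eq_one hm hr h, mul_one]
    · rw [ha t h, zero_mul, zero_mul]
  rw [vilCoeff, vilCoeff, hfun]

lemma measurableSet_IN (N : ℕ) : MeasurableSet {y : Gm m | ∀ j < N, y j = 0} := by
  have h : {y : Gm m | ∀ j < N, y j = 0}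
      = ⋂ j ∈ Finset.range N, {y : Gm m | y j = 0} := by
    ext y; simp
  rw [h]
  apply Finset.measurableSet_biInter
  intro j _
  have h1 : MeasurableSet {z : ZMod (m j) | z = 0} := MeasurableSpace.measurableSet_top
  have h2 : {y : Gm m | y j = 0} = (fun y : Gm m => y j) ⁻¹' {z : ZMod (m j) | z = 0} := rfl
  rw [h2]
  exact (measurable_pi_apply j) h1

end aux5

section aux6
open MeasureTheory
variable {m : ℕ → ℕ} (hm : ∀ k, 2 ≤ m k)
include hm

lemma abs_vilCoeff_le {N : ℕ} {p : ℝ} (μ : Measure (Gm m)) [IsProbabilityMeasure μ]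
    (hhaar : IsVilenkinHaar m μ) {a : Gm m → ℂ} (ha : IsPAtom m μ p N a) (k : ℕ) :
    ‖vilCoeff m μ a k‖ ≤ (Mseq m N : ℝ) ^ (1 / p - 1) := by
  obtain ⟨hmeas, hsupp, hbd, _⟩ := ha
  set I := {y : Gm m | ∀ j < N, y j = 0} with hIdef
  have hI : MeasurableSet I := measurableSet_IN hm N
  have hμI : μ I = (Mseq m N : ENNReal)⁻¹ := by
    simpa using hhaar N (fun _ => 0)
  have hMpos : (0:ℝ) < (Mseq m N : ℝ) := by exact_mod_cast Mseq_pos hm N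
  calc ‖vilCoeff m μ a k‖
      = ‖∫ t, a t * (starRingEnd ℂ) (vil m k t) ∂μ‖ := rfl
  _ ≤ ∫ t, ‖a t * (starRingEnd ℂ) (vil m k t)‖ ∂μ := norm_integral_le_integral_norm _
  _ = ∫ t, ‖a t‖ ∂μ := by
      congr 1
      funext t
      rw [norm_mul]
      have h1 : ‖(starRingEnd ℂ) (vil m k t)‖ = 1 := by
        rw [Complex.norm_conj]
        exact abs_vil hm k t
      rw [h1, mul_one]
  _ ≤ ∫ t, Set.indicator I (fun _ => (Mseq m N : ℝ) ^ (1 / p)) t ∂μ := by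
      apply integral_mono_of_nonneg
      · exact Filter.Eventually.of_forall (fun t => norm_nonneg _)
      · exact (integrable_const _).indicator hI
      · apply Filter.Eventually.of_forall
        intro t
        by_cases h : t ∈ I
        · rw [Set.indicator_of_mem h]
          show ‖a t‖ ≤ _
          simpa using hbd t
        · rw [Set.indicator_of_notMem h]
          show ‖a t‖ ≤ 0
          rw [hsupp t h]
          simp
  _ = ((μ I).toReal) * (Mseq m N : ℝ) ^ (1 / p) := by
      rw [integral_indicator_const _ hI, smul_eq_mul]
      rfl
  _ = (Mseq m N : ℝ)⁻¹ * (Mseq m N : ℝ) ^ (1 / p) := by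
      rw [hμI, ENNReal.toReal_inv]
      norm_num
  _ = (Mseq m N : ℝ) ^ (1 / p - 1) := by
      rw [Real.rpow_sub hMpos, Real.rpow_one]
      ring

end aux6

/-- If `a` is a `p`-atom on `I_N`, `α > M_N`, and `x ∈ I_s \ I_{s+1}` with
`⟨α⟩ ≤ s ≤ N - 1`, then `|S_α a (x)| ≤ c_p M_N^{1/p-1} M_s`, with `c_p`
depending only on `p` and `sup m_k`. -/
theorem stmt_17 (p : ℝ) (hp0 : 0 < p) (hp1 : p ≤ 1) (mstar : ℕ) :
    ∃ c : ℝ, 0 < c ∧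
      ∀ (m : ℕ → ℕ), (∀ k, 2 ≤ m k) → (∀ k, m k ≤ mstar) →
        ∀ (μ : Measure (Gm m)), IsProbabilityMeasure μ → IsVilenkinHaar m μ →
          ∀ (N : ℕ) (a : Gm m → ℂ), IsPAtom m μ p N a →
            ∀ (α : ℕ), Mseq m N < α →
              ∀ (s : ℕ) (x : Gm m), lo m α ≤ s → s < N →
                (∀ j < s, x j = 0) → x s ≠ 0 →
                ‖Svil m μ a α x‖
                  ≤ c * (Mseq m N : ℝ) ^ (1 / p - 1) * (Mseq m s : ℝ) := by
  refine ⟨(mstar : ℝ)^2 + 1, by positivity, ?_⟩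
  intro m hm hms μ hprob hhaar N a hatom α hα s x _ hsN hxlo hxs
  haveI := hprob
  have hBpos : 0 < Mseq m N := Mseq_pos hm N
  have hRB : α % Mseq m N < Mseq m N := Nat.mod_lt _ hBpos
  have hαeq : α = (α / Mseq m N) * Mseq m N + α % Mseq m N := by
    rw [mul_comm]; exact (Nat.div_add_mod α (Mseq m N)).symm
  have hDN : Dker m (Mseq m N) x = 0 := Dker_Mseq_eq_zero hm hsN hxs
  have hsupp := hatom.2.1
  have hblock : ∀ q T, T ≤ Mseq m N →
      ∑ r ∈ Finset.range T, vilCoeff m μ a (q * Mseq m N + r) * vil m (q * Mseq m N + r) x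
        = vilCoeff m μ a (q * Mseq m N) * vil m (q * Mseq m N) x * Dker m T x := by
    intro q T hT
    rw [Dker, Finset.mul_sum]
    apply Finset.sum_congr rfl
    intro r hr
    have hrB : r < Mseq m N := lt_of_lt_of_le (Finset.mem_range.mp hr) hT
    rw [vilCoeff_block hm hrB μ hsupp, vil_add_mul hm hrB x]
    ring
  have hsplit : Svil m μ a α x
      = vilCoeff m μ a ((α / Mseq m N) * Mseq m N)
        * vil m ((α / Mseq m N) * Mseq m N) x * Dker m (α % Mseq m N) x := by
    rw [Svil, show Finset.range α
        = Finset.range ((α / Mseq m N) * Mseq m N + α % Mseq m N) from by rw [← hαeq]]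
    rw [Finset.sum_range_add, sum_range_mul']
    have h1 : ∑ q ∈ Finset.range (α / Mseq m N), ∑ r ∈ Finset.range (Mseq m N),
        vilCoeff m μ a (q * Mseq m N + r) * vil m (q * Mseq m N + r) x = 0 := by
      apply Finset.sum_eq_zero
      intro q _
      rw [hblock q (Mseq m N) le_rfl, hDN, mul_zero]
    rw [h1, zero_add, hblock (α / Mseq m N) (α % Mseq m N) (le_of_lt hRB)]
  rw [hsplit, norm_mul, norm_mul, abs_vil hm, mul_one]
  have h2 : ‖vilCoeff m μ a ((α / Mseq m N) * Mseq m N)‖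
      ≤ (Mseq m N : ℝ) ^ (1/p - 1) := abs_vilCoeff_le hm μ hhaar hatom _
  have h3 : ‖Dker m (α % Mseq m N) x‖
      ≤ (mstar : ℝ) * (mstar : ℝ) * (Mseq m s : ℝ) := abs_Dker_final hm hms hxs hRB
  have hnn : (0:ℝ) ≤ (Mseq m N : ℝ) ^ (1/p - 1) := Real.rpow_nonneg (by positivity) _
  have hMs : (0:ℝ) ≤ (Mseq m s : ℝ) := by positivity
  calc ‖vilCoeff m μ a ((α / Mseq m N) * Mseq m N)‖
        * ‖Dker m (α % Mseq m N) x‖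
      ≤ (Mseq m N : ℝ) ^ (1/p - 1) * ((mstar : ℝ) * (mstar : ℝ) * (Mseq m s : ℝ)) :=
        mul_le_mul h2 h3 (norm_nonneg _) hnn
  _ ≤ ((mstar : ℝ)^2 + 1) * (Mseq m N : ℝ) ^ (1/p - 1) * (Mseq m s : ℝ) := by
      nlinarith [mul_nonneg hnn hMs]
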